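/- Derivative of the Poisson normalising constant (Equation 17): In the setting of Equation 16, define c(a₀) = (β₀^{α₀}/Γ(α₀)) · p′^{−a₀} · Γ(a₀ s + α₀) / (a₀ N₀ + β₀)^{a₀ s + α₀} for a₀ ≥ 0, and let ψ₀ denote the digamma function, ψ₀(x) = d/dx log Γ(x) for x > 0. Then for every a₀ > 0, c is differentiable at a₀ with c′(a₀) = [ −log p′ − N₀ (α₀ + s a₀)/(β₀ + N₀ a₀) − s log(β₀ + N₀ a₀) + s ψ₀(α₀ + s a₀) ] · c(a₀). -/

import Mathlib

open MeasureTheory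

/-- Derivative of the Poisson normalising constant (Equation 17): with
`c a = (β₀^{α₀}/Γ(α₀)) p'^{−a} Γ(a s + α₀) / (a N₀ + β₀)^{a s + α₀}` and `ψ₀`
the digamma function (the derivative of `log ∘ Γ`), for every `a₀ > 0`,
`c` is differentiable at `a₀` with derivative
`(−log p' − N₀(α₀ + s a₀)/(β₀ + N₀ a₀) − s log(β₀ + N₀ a₀) + s ψ₀(α₀ + s a₀)) c(a₀)`. -/
theorem power_prior_poisson_normalising_constant_deriv
    (N₀ : ℕ) (hN₀ : 0 < N₀) (s : ℕ) (p' : ℝ) (hp' : 0 < p')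
    (α₀ β₀ : ℝ) (hα₀ : 0 < α₀) (hβ₀ : 0 < β₀)
    (c : ℝ → ℝ)
    (hc : ∀ a : ℝ, c a = (β₀ ^ α₀ / Real.Gamma α₀) * p' ^ (-a)
      * Real.Gamma (a * s + α₀) / (a * N₀ + β₀) ^ (a * s + α₀))
    (ψ₀ : ℝ → ℝ)
    (hψ₀ : ∀ x : ℝ, 0 < x →
      HasDerivAt (fun t : ℝ => Real.log (Real.Gamma t)) (ψ₀ x) x)
    (a₀ : ℝ) (ha₀ : 0 < a₀) :
    HasDerivAt c
      ((-Real.log p' - (N₀ : ℝ) * (α₀ + s * a₀) / (β₀ + N₀ * a₀)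
          - s * Real.log (β₀ + N₀ * a₀) + s * ψ₀ (α₀ + s * a₀)) * c a₀)
      a₀ := by
  set K := β₀ ^ α₀ / Real.Gamma α₀ with hK
  set h : ℝ → ℝ := fun a => -(a * Real.log p')
      + Real.log (Real.Gamma (a * s + α₀))
      - (a * s + α₀) * Real.log (a * N₀ + β₀) with hh
  have hxpos : (0:ℝ) < a₀ * N₀ + β₀ := by positivity
  have key : ∀ a : ℝ, 0 < a → c a = K * Real.exp (h a) := by
    intro a ha
    have hΓ : 0 < Real.Gamma (a * s + α₀) := Real.Gamma_pos_of_pos (by positivity)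
    have h1 : p' ^ (-a) = Real.exp (-(a * Real.log p')) := by
      rw [Real.rpow_def_of_pos hp']; ring_nf
    have h2 : Real.Gamma (a * s + α₀) = Real.exp (Real.log (Real.Gamma (a * s + α₀))) :=
      (Real.exp_log hΓ).symm
    have h3 : (a * N₀ + β₀) ^ (a * s + α₀)
        = Real.exp ((a * s + α₀) * Real.log (a * N₀ + β₀)) := by
      rw [Real.rpow_def_of_pos (by positivity), mul_comm]
    rw [hc a, h1, h3]
    conv_lhs => rw [h2]
    simp only [hh]
    rw [Real.exp_sub, Real.exp_add]
    ring
  have hu : HasDerivAt (fun a : ℝ => a * (s:ℝ) + α₀) (s:ℝ) a₀ := by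
    simpa using ((hasDerivAt_id a₀).mul_const (s:ℝ)).add_const α₀
  have hΓlog : HasDerivAt (fun a : ℝ => Real.log (Real.Gamma (a * s + α₀)))
      (ψ₀ (a₀ * s + α₀) * s) a₀ := by
    have := (hψ₀ (a₀ * s + α₀) (by positivity)).comp a₀ hu
    exact this
  have hv : HasDerivAt (fun a : ℝ => a * (N₀:ℝ) + β₀) (N₀:ℝ) a₀ := by
    simpa using ((hasDerivAt_id a₀).mul_const (N₀:ℝ)).add_const β₀
  have hlogv : HasDerivAt (fun a : ℝ => Real.log (a * N₀ + β₀))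
      ((N₀:ℝ) / (a₀ * N₀ + β₀)) a₀ := by
    simpa using hv.log hxpos.ne'
  have hterm3 : HasDerivAt (fun a : ℝ => (a * s + α₀) * Real.log (a * N₀ + β₀))
      ((s:ℝ) * Real.log (a₀ * N₀ + β₀) + (a₀ * s + α₀) * ((N₀:ℝ) / (a₀ * N₀ + β₀))) a₀ :=
    hu.mul hlogv
  have hterm1 : HasDerivAt (fun a : ℝ => -(a * Real.log p')) (-Real.log p') a₀ := by
    have := ((hasDerivAt_id a₀).mul_const (Real.log p')).neg
    rw [one_mul] at this
    exact this
  have hH : HasDerivAt h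
      (-Real.log p' + ψ₀ (a₀ * s + α₀) * s
        - ((s:ℝ) * Real.log (a₀ * N₀ + β₀) + (a₀ * s + α₀) * ((N₀:ℝ) / (a₀ * N₀ + β₀)))) a₀ :=
    (hterm1.add hΓlog).sub hterm3
  have hg : HasDerivAt (fun a : ℝ => K * Real.exp (h a))
      (K * (Real.exp (h a₀) *
        (-Real.log p' + ψ₀ (a₀ * s + α₀) * s
          - ((s:ℝ) * Real.log (a₀ * N₀ + β₀) + (a₀ * s + α₀) * ((N₀:ℝ) / (a₀ * N₀ + β₀)))))) a₀ :=
    (hH.exp).const_mul K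
  have heq : c =ᶠ[nhds a₀] fun a => K * Real.exp (h a) := by
    filter_upwards [eventually_gt_nhds ha₀] with a ha using key a ha
  have := hg.congr_of_eventuallyEq heq
  refine this.congr_deriv ?_
  rw [key a₀ ha₀]
  have e1 : α₀ + (s:ℝ) * a₀ = a₀ * s + α₀ := by ring
  have e2 : β₀ + (N₀:ℝ) * a₀ = a₀ * N₀ + β₀ := by ring
  rw [e1, e2]
  field_simp
  ring
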